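/- Let δ_θ^ε(o,o) denote, for a unit vector θ ∈ ℝ_{≥0}^r and ε > 0, the critical exponent of the restricted Poincaré series Q_θ^{s,ε}(o,o) = Σ_{γ ∈ Γ(o,o;θ,ε)} e^{−s·d(o,γo)}, where Γ(o,o;θ,ε) = {γ ∈ Γ : γo ≠ o, ‖Ĥ(o,γo) − θ‖ < ε}. Define δ_θ(Γ) = lim_{ε→0} δ_θ^ε(o,o). Then the map θ ↦ δ_θ(Γ) is upper semi-continuous: for any sequence θ^{(j)} → θ in the unit sphere of ℝ_{≥0}^r, limsup_{j→∞} δ_{θ^{(j)}}(Γ) ≤ δ_θ(Γ). -/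

import Mathlib

open Filter

/-- The critical exponent (in ℝ ∪ {±∞}) of the restricted Poincaré series
Q_θ^{s,ε}(o,o) = Σ_{γ : γo≠o, ‖Ĥ(o,γo)−θ‖<ε} e^{−s·d(o,γo)}. -/
noncomputable def critExp {Γ X : Type*} [MetricSpace X] [Group Γ] [MulAction Γ X]
    {r : ℕ} (H : Γ → EuclideanSpace ℝ (Fin r)) (o : X)
    (θ : EuclideanSpace ℝ (Fin r)) (ε : ℝ) : EReal :=
  sInf (Real.toEReal '' {s : ℝ |
    Summable (fun γ : {γ : Γ // γ • o ≠ o ∧ ‖(dist o (γ • o))⁻¹ • H γ - θ‖ < ε} =>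
      Real.exp (-s * dist o ((γ : Γ) • o)))})

/-- The exponent of growth of slope θ: δ_θ(Γ) = lim_{ε→0} δ_θ^ε(o,o), realized
as the infimum over ε > 0 since δ_θ^ε is nonincreasing in ε. -/
noncomputable def growthExp {Γ X : Type*} [MetricSpace X] [Group Γ] [MulAction Γ X]
    {r : ℕ} (H : Γ → EuclideanSpace ℝ (Fin r)) (o : X)
    (θ : EuclideanSpace ℝ (Fin r)) : EReal :=
  ⨅ (ε : ℝ) (_ : 0 < ε), critExp H o θ ε


lemma summable_mono_pred {Γ : Type*} {g : Γ → ℝ} {P Q : Γ → Prop}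
    (h : ∀ γ, P γ → Q γ)
    (hs : Summable (fun γ : {γ : Γ // Q γ} => g γ)) :
    Summable (fun γ : {γ : Γ // P γ} => g γ) := by
  have hQ : Summable ({γ : Γ | Q γ}.indicator g) :=
    (summable_subtype_iff_indicator).mp hs
  have hP : Summable ({γ : Γ | P γ}.indicator ({γ : Γ | Q γ}.indicator g)) :=
    hQ.indicator _
  have heq : {γ : Γ | P γ}.indicator ({γ : Γ | Q γ}.indicator g)
      = {γ : Γ | P γ}.indicator g := by
    rw [Set.indicator_indicator]
    have h2 : {γ : Γ | P γ} ∩ {γ : Γ | Q γ} = {γ : Γ | P γ} :=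
      Set.inter_eq_left.mpr (fun γ hγ => h γ hγ)
    rw [h2]
  rw [heq] at hP
  exact (summable_subtype_iff_indicator).mpr hP

lemma critExp_mono {Γ X : Type*} [MetricSpace X] [Group Γ] [MulAction Γ X]
    {r : ℕ} (H : Γ → EuclideanSpace ℝ (Fin r)) (o : X)
    {θ₁ θ₂ : EuclideanSpace ℝ (Fin r)} {ε₁ ε₂ : ℝ}
    (h : ∀ v : EuclideanSpace ℝ (Fin r), ‖v - θ₁‖ < ε₁ → ‖v - θ₂‖ < ε₂) :
    critExp H o θ₁ ε₁ ≤ critExp H o θ₂ ε₂ := by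
  have hsub : {s : ℝ |
      Summable (fun γ : {γ : Γ // γ • o ≠ o ∧ ‖(dist o (γ • o))⁻¹ • H γ - θ₂‖ < ε₂} =>
        Real.exp (-s * dist o ((γ : Γ) • o)))} ⊆ {s : ℝ |
      Summable (fun γ : {γ : Γ // γ • o ≠ o ∧ ‖(dist o (γ • o))⁻¹ • H γ - θ₁‖ < ε₁} =>
        Real.exp (-s * dist o ((γ : Γ) • o)))} :=
    fun s hs => summable_mono_pred (g := fun γ : Γ => Real.exp (-s * dist o (γ • o)))
      (fun γ hγ => ⟨hγ.1, h _ hγ.2⟩) hs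
  exact sInf_le_sInf (Set.image_mono hsub)

/-- Upper semi-continuity of the exponent of growth: if θ⁽ʲ⁾ → θ in the unit
sphere of ℝ₊ʳ then limsup δ_{θ⁽ʲ⁾}(Γ) ≤ δ_θ(Γ). -/
theorem stmt9 (r : ℕ) {Γ X : Type*} [MetricSpace X] [Group Γ] [Countable Γ]
    [MulAction Γ X]
    (hiso : ∀ (γ : Γ) (x y : X), dist (γ • x) (γ • y) = dist x y)
    (o : X)
    (hproper : ∀ R : ℝ, {γ : Γ | dist o (γ • o) ≤ R}.Finite)
    (H : Γ → EuclideanSpace ℝ (Fin r))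
    (hH : ∀ γ, ‖H γ‖ = dist o (γ • o) ∧ ∀ i, 0 ≤ H γ i)
    (θseq : ℕ → EuclideanSpace ℝ (Fin r)) (θ : EuclideanSpace ℝ (Fin r))
    (hunit : ∀ j, ‖θseq j‖ = 1) (hpos : ∀ j i, 0 ≤ θseq j i)
    (hθ : ‖θ‖ = 1) (hθpos : ∀ i, 0 ≤ θ i)
    (hconv : Tendsto θseq atTop (nhds θ)) :
    limsup (fun j => growthExp H o (θseq j)) atTop ≤ growthExp H o θ := by
  rw [growthExp]
  refine le_iInf₂ fun ε hε => ?_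
  apply Filter.limsup_le_of_le (by isBoundedDefault)
  obtain ⟨N, hN⟩ := Metric.tendsto_atTop.mp hconv (ε/2) (by positivity)
  filter_upwards [eventually_atTop.mpr ⟨N, fun j hj => hN j hj⟩] with j hj
  calc growthExp H o (θseq j) ≤ critExp H o (θseq j) (ε/2) := by
        exact iInf₂_le (ε/2) (by positivity)
    _ ≤ critExp H o θ ε := by
        apply critExp_mono
        intro v hv
        have h1 : ‖θseq j - θ‖ < ε/2 := by rwa [← dist_eq_norm]
        calc ‖v - θ‖ = ‖(v - θseq j) + (θseq j - θ)‖ := by rw [sub_add_sub_cancel]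
          _ ≤ ‖v - θseq j‖ + ‖θseq j - θ‖ := norm_add_le _ _
          _ < ε/2 + ε/2 := add_lt_add hv h1
          _ = ε := by ring
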